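/- Let F = (X_1, …, X_n) with X_i ∈ ℝ^{d×d_i} be a matrix frame, c = (c_1,…,c_n) ∈ ℚ^n_{>0} with ∑_{i=1}^n c_i = d, and t* = (t*_1,…,t*_n) ∈ ℝ^n. Then the following are equivalent: (1) f_F(c) is finite and the infimum defining f_F(c) is attained at t*; (2) the point (e^{t*_1},…,e^{t*_n}) belongs to 𝕍(F,c). -/

import Mathlib

open scoped BigOperators
open Matrix

namespace MFrames

/-- The squared Frobenius norm of a real matrix. -/
noncomputable def frobSq {α β : Type*} [Fintype α] [Fintype β] (X : Matrix α β ℝ) : ℝ :=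
  ∑ i, ∑ j, X i j ^ 2

variable {d n : ℕ} {m : Fin n → ℕ}

/-- Squared distance between two tuples of matrices. -/
noncomputable def dist2 (F G : ∀ i : Fin n, Matrix (Fin d) (Fin (m i)) ℝ) : ℝ :=
  ∑ i, frobSq (F i - G i)

/-- The frame operator `∑ Xᵢ Xᵢᵀ`. -/
noncomputable def frameOp (F : ∀ i : Fin n, Matrix (Fin d) (Fin (m i)) ℝ) :
    Matrix (Fin d) (Fin d) ℝ :=
  ∑ i, F i * (F i)ᵀ

/-- `F` is a matrix frame: `∑ Xᵢ Xᵢᵀ` is positive definite. -/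
def IsMatrixFrame (F : ∀ i : Fin n, Matrix (Fin d) (Fin (m i)) ℝ) : Prop :=
  (frameOp F).PosDef

/-- `F` is an ε-nearly equal-norm Parseval matrix frame. -/
def NearlyENParseval (ε : ℝ) (F : ∀ i : Fin n, Matrix (Fin d) (Fin (m i)) ℝ) : Prop :=
  (frameOp F - (1 - ε) • (1 : Matrix (Fin d) (Fin d) ℝ)).PosSemidef ∧
  ((1 + ε) • (1 : Matrix (Fin d) (Fin d) ℝ) - frameOp F).PosSemidef ∧
  ∀ i, (1 - ε) * ((d : ℝ) / n) ≤ frobSq (F i) ∧ frobSq (F i) ≤ (1 + ε) * ((d : ℝ) / n)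

/-- `F` is an equal-norm Parseval matrix frame. -/
def EqualNormParseval (F : ∀ i : Fin n, Matrix (Fin d) (Fin (m i)) ℝ) : Prop :=
  frameOp F = 1 ∧ ∀ i, frobSq (F i) = (d : ℝ) / n

/-- The columns of the concatenated matrix `[X₁ | … | Xₙ]`. -/
def col (F : ∀ i : Fin n, Matrix (Fin d) (Fin (m i)) ℝ) (p : (i : Fin n) × Fin (m i)) :
    Fin d → ℝ :=
  fun r => F p.1 r p.2

/-- `F` is generic: `n > d` and any `d` of the columns of `[X₁ | … | Xₙ]` are linearly
independent (hence a basis of `ℝ^d`). -/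
def Generic (F : ∀ i : Fin n, Matrix (Fin d) (Fin (m i)) ℝ) : Prop :=
  d < n ∧ ∀ S : Finset ((i : Fin n) × Fin (m i)), S.card = d →
    LinearIndependent ℝ (fun p : S => col F (p : (i : Fin n) × Fin (m i)))

/-- Column span of a matrix. -/
def colSpan {k : ℕ} (X : Matrix (Fin d) (Fin k) ℝ) : Submodule ℝ (Fin d → ℝ) :=
  Submodule.span ℝ (Set.range Xᵀ)

/-- The orbit polytope `K_F` of a tuple of matrices. -/
def orbitPolytope (F : ∀ i : Fin n, Matrix (Fin d) (Fin (m i)) ℝ) : Set (Fin n → ℝ) :=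
  {c | (∀ i, 0 ≤ c i) ∧ (∑ i, c i = d) ∧
    ∀ I : Finset (Fin n),
      ∑ i ∈ I, c i ≤ (Module.finrank ℝ ↥(⨆ i ∈ I, colSpan (F i)) : ℝ)}

/-- `Φ_F(t) = log det (∑ e^{tᵢ} Xᵢ Xᵢᵀ)`. -/
noncomputable def Phi (F : ∀ i : Fin n, Matrix (Fin d) (Fin (m i)) ℝ) (t : Fin n → ℝ) : ℝ :=
  Real.log (∑ i, Real.exp (t i) • (F i * (F i)ᵀ)).det

/-- The objective function `Φ_F(t) - ⟨t, c⟩` whose infimum over `t` is `f_F(c)`. -/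
noncomputable def obj (F : ∀ i : Fin n, Matrix (Fin d) (Fin (m i)) ℝ)
    (c : Fin n → ℝ) (t : Fin n → ℝ) : ℝ :=
  Phi F t - ∑ i, t i * c i

/-- `Δ_S` for `S ∈ 𝒜`, where `S` is encoded as a function `σ` assigning to each `i` a subset
`σ i ⊆ {1,…,dᵢ}` of the columns of `Xᵢ` (with `i ∈ S` iff `σ i ≠ ∅`). -/
noncomputable def Delta (F : ∀ i : Fin n, Matrix (Fin d) (Fin (m i)) ℝ)
    (σ : ∀ i : Fin n, Finset (Fin (m i))) : ℝ :=
  (∑ i, ∑ k ∈ σ i, Matrix.of (fun r s : Fin d => F i r k * F i s k)).det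

/-- The index set `𝒜`: collections of subsets of columns with `d` columns in total. -/
def indexA (d : ℕ) (m : Fin n → ℕ) : Finset (∀ i : Fin n, Finset (Fin (m i))) :=
  Finset.univ.filter fun σ => (∑ i, (σ i).card) = d

/-- Membership in the semialgebraic set `𝕍(F, c)`.  (Summing `(σ i).card • ⋯` over all of
`𝒜` is the same as summing `|Sᵢ| • ⋯` over those `S ∈ 𝒜` with `i ∈ S`.) -/
noncomputable def inVariety (F : ∀ i : Fin n, Matrix (Fin d) (Fin (m i)) ℝ)
    (c ξ : Fin n → ℝ) : Prop :=
  (∀ i, 0 < ξ i) ∧ ∀ i,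
    (∑ σ ∈ indexA d m, ((σ i).card : ℝ) * (∏ l, ξ l ^ (σ l).card) * Delta F σ)
      = c i * ∑ σ ∈ indexA d m, (∏ l, ξ l ^ (σ l).card) * Delta F σ

/-- `A` transforms `(F, c)` into a radial isotropic frame. -/
noncomputable def TransformsToRIF (F : ∀ i : Fin n, Matrix (Fin d) (Fin (m i)) ℝ)
    (c : Fin n → ℝ) (A : Matrix (Fin d) (Fin d) ℝ) : Prop :=
  ∑ i, (c i / frobSq (A * F i)) • ((A * F i) * (A * F i)ᵀ) = 1

/-- Columns of `X` all orthogonal to the subspace `T`, i.e. `Col(X) ⊆ T^⊥`. -/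
def colsPerp {k : ℕ} (X : Matrix (Fin d) (Fin k) ℝ) (T : Submodule ℝ (Fin d → ℝ)) : Prop :=
  ∀ x ∈ T, Xᵀ.mulVec x = 0

end MFrames


namespace MFrames

section Aux

variable {d n : ℕ} {m : Fin n → ℕ}

/-- The contribution of one choice function `f` picking a column for each row index. -/
noncomputable def termF (F : ∀ i : Fin n, Matrix (Fin d) (Fin (m i)) ℝ)
    (f : Fin d → (i : Fin n) × Fin (m i)) : ℝ :=
  (∏ r, col F (f r) r) * Matrix.detRowAlternating (fun r : Fin d => col F (f r))

lemma termF_zero (F : ∀ i : Fin n, Matrix (Fin d) (Fin (m i)) ℝ)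
    {f : Fin d → (i : Fin n) × Fin (m i)} (hf : ¬ Function.Injective f) :
    termF F f = 0 := by
  unfold Function.Injective at hf
  push_neg at hf
  obtain ⟨a, b, hab, hne⟩ := hf
  have h0 : Matrix.detRowAlternating (fun r : Fin d => col F (f r)) = 0 :=
    (Matrix.detRowAlternating (R := ℝ) (n := Fin d)).map_eq_zero_of_eq
      (fun r : Fin d => col F (f r)) (by show col F (f a) = col F (f b); rw [hab]) hne
  simp [termF, h0]

lemma det_expand (F : ∀ i : Fin n, Matrix (Fin d) (Fin (m i)) ℝ)
    (w : ((i : Fin n) × Fin (m i)) → ℝ) :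
    (Matrix.of fun r s : Fin d =>
        ∑ p : (i : Fin n) × Fin (m i), w p * (col F p r * col F p s)).det
      = ∑ f : Fin d → (i : Fin n) × Fin (m i), (∏ r, w (f r)) * termF F f := by
  classical
  have h1 : (Matrix.of fun r s : Fin d =>
        ∑ p : (i : Fin n) × Fin (m i), w p * (col F p r * col F p s))
      = fun r : Fin d => ∑ p : (i : Fin n) × Fin (m i), (w p * col F p r) • col F p := by
    funext r s
    simp only [Matrix.of_apply, Finset.sum_apply, Pi.smul_apply, smul_eq_mul]
    exact Finset.sum_congr rfl fun p _ => by ring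
  have h2 : (Matrix.of fun r s : Fin d =>
        ∑ p : (i : Fin n) × Fin (m i), w p * (col F p r * col F p s)).det
      = (Matrix.detRowAlternating (R := ℝ) (n := Fin d)).toMultilinearMap
          (fun r : Fin d => ∑ p : (i : Fin n) × Fin (m i), (w p * col F p r) • col F p) := by
    rw [show ((Matrix.detRowAlternating (R := ℝ) (n := Fin d)).toMultilinearMap
          (fun r : Fin d => ∑ p : (i : Fin n) × Fin (m i), (w p * col F p r) • col F p) : ℝ)
        = (Matrix.detRowAlternating (R := ℝ) (n := Fin d))
          (fun r : Fin d => ∑ p : (i : Fin n) × Fin (m i), (w p * col F p r) • col F p) from rfl]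
    rw [h1]
    rfl
  rw [h2, MultilinearMap.map_sum]
  refine Finset.sum_congr rfl fun f _ => ?_
  have h3 : ((Matrix.detRowAlternating (R := ℝ) (n := Fin d)).toMultilinearMap
        (fun r : Fin d => (w (f r) * col F (f r) r) • col F (f r)) : ℝ)
      = (∏ r : Fin d, (w (f r) * col F (f r) r))
          • (Matrix.detRowAlternating (R := ℝ) (n := Fin d)).toMultilinearMap
            (fun r : Fin d => col F (f r)) :=
    MultilinearMap.map_smul_univ _ _ _
  rw [h3]
  simp only [smul_eq_mul, termF, Finset.prod_mul_distrib, AlternatingMap.coe_multilinearMap]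
  ring

/-- The finset of column indices selected by `σ`. -/
def Sset (σ : ∀ i : Fin n, Finset (Fin (m i))) : Finset ((i : Fin n) × Fin (m i)) :=
  Finset.univ.sigma σ

lemma mem_Sset {σ : ∀ i : Fin n, Finset (Fin (m i))} {p : (i : Fin n) × Fin (m i)} :
    p ∈ Sset σ ↔ p.2 ∈ σ p.1 := by
  simp [Sset]

lemma Delta_entry (F : ∀ i : Fin n, Matrix (Fin d) (Fin (m i)) ℝ)
    (σ : ∀ i : Fin n, Finset (Fin (m i))) :
    Delta F σ = (Matrix.of fun r s : Fin d =>
        ∑ p : (i : Fin n) × Fin (m i),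
          (if p ∈ Sset σ then (1 : ℝ) else 0) * (col F p r * col F p s)).det := by
  classical
  unfold Delta
  congr 1
  ext r s
  rw [Matrix.of_apply]
  have hite : ∀ p : (i : Fin n) × Fin (m i),
      (if p ∈ Sset σ then (1 : ℝ) else 0) * (col F p r * col F p s)
        = if p ∈ Sset σ then col F p r * col F p s else 0 := by
    intro p; split <;> simp
  rw [Finset.sum_congr rfl fun p _ => hite p, Fintype.sum_ite_mem,
    show (Sset σ : Finset ((i : Fin n) × Fin (m i))) = Finset.univ.sigma σ from rfl,
    Finset.sum_sigma]
  simp [Matrix.sum_apply, col]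

lemma Delta_expand (F : ∀ i : Fin n, Matrix (Fin d) (Fin (m i)) ℝ)
    (σ : ∀ i : Fin n, Finset (Fin (m i))) :
    Delta F σ = ∑ f ∈ Finset.univ.filter
        (fun f : Fin d → (i : Fin n) × Fin (m i) => ∀ r, f r ∈ Sset σ), termF F f := by
  classical
  rw [Delta_entry, det_expand, Finset.sum_filter]
  refine Finset.sum_congr rfl fun f _ => ?_
  by_cases h : ∀ r, f r ∈ Sset σ
  · rw [if_pos h]
    have : ∀ r : Fin d, (if f r ∈ Sset σ then (1 : ℝ) else 0) = 1 := fun r => if_pos (h r)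
    simp [this]
  · rw [if_neg h]
    push_neg at h
    obtain ⟨r0, hr0⟩ := h
    rw [Finset.prod_eq_zero (Finset.mem_univ r0) (by rw [if_neg hr0]), zero_mul]

lemma sigma_key (f : Fin d → (i : Fin n) × Fin (m i)) :
    Finset.univ.sigma (fun i => Finset.univ.filter
        (fun k : Fin (m i) => (⟨i, k⟩ : (i : Fin n) × Fin (m i)) ∈ Finset.image f Finset.univ))
      = Finset.image f Finset.univ := by
  classical
  ext p
  rcases p with ⟨i, k⟩
  simp

/-- Cauchy–Binet style expansion of `det (∑ ξᵢ Xᵢ Xᵢᵀ)`. -/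
lemma det_sum_smul_eq (F : ∀ i : Fin n, Matrix (Fin d) (Fin (m i)) ℝ) (ξ : Fin n → ℝ) :
    (∑ i, ξ i • (F i * (F i)ᵀ)).det
      = ∑ σ ∈ indexA d m, (∏ l, ξ l ^ (σ l).card) * Delta F σ := by
  classical
  have h0 : (∑ i, ξ i • (F i * (F i)ᵀ))
      = Matrix.of fun r s : Fin d =>
          ∑ p : (i : Fin n) × Fin (m i), ξ p.1 * (col F p r * col F p s) := by
    ext r s
    rw [Matrix.of_apply, ← Finset.univ_sigma_univ, Finset.sum_sigma]
    simp [Matrix.sum_apply, Matrix.mul_apply, Finset.mul_sum, col, mul_assoc]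
  rw [h0, det_expand]
  set key : (Fin d → (i : Fin n) × Fin (m i)) → (∀ i : Fin n, Finset (Fin (m i))) :=
    fun f i => Finset.univ.filter
      (fun k : Fin (m i) => (⟨i, k⟩ : (i : Fin n) × Fin (m i)) ∈ Finset.image f Finset.univ)
    with hkeydef
  have hkey : ∀ f : Fin d → (i : Fin n) × Fin (m i),
      Finset.univ.sigma (key f) = Finset.image f Finset.univ := fun f => sigma_key f
  -- split off non-injective f
  rw [← Finset.sum_filter_add_sum_filter_not Finset.univ
    (fun f : Fin d → (i : Fin n) × Fin (m i) => Function.Injective f)]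
  have hz : ∑ f ∈ Finset.univ.filter
      (fun f : Fin d → (i : Fin n) × Fin (m i) => ¬ Function.Injective f),
      (∏ r, ξ (f r).1) * termF F f = 0 := by
    refine Finset.sum_eq_zero fun f hf => ?_
    rw [termF_zero F (Finset.mem_filter.mp hf).2, mul_zero]
  rw [hz, add_zero]
  have hmaps : ∀ f ∈ Finset.univ.filter
      (fun f : Fin d → (i : Fin n) × Fin (m i) => Function.Injective f),
      key f ∈ indexA d m := by
    intro f hf
    have hinj : Function.Injective f := (Finset.mem_filter.mp hf).2
    simp only [indexA, Finset.mem_filter, Finset.mem_univ, true_and]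
    calc ∑ i, (key f i).card = (Finset.univ.sigma (key f)).card :=
          (Finset.card_sigma _ _).symm
      _ = (Finset.image f Finset.univ).card := by rw [hkey]
      _ = d := by
          rw [Finset.card_image_of_injective _ hinj, Finset.card_univ, Fintype.card_fin]
  rw [← Finset.sum_fiberwise_of_maps_to hmaps
    (fun f => (∏ r, ξ (f r).1) * termF F f)]
  refine Finset.sum_congr rfl fun σ hσ => ?_
  have hσd : ∑ i, (σ i).card = d := by
    simpa [indexA] using hσ
  have hScard : (Sset σ).card = d := by
    rw [Sset, Finset.card_sigma]; simpa using hσd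
  have hchar : ∀ f : Fin d → (i : Fin n) × Fin (m i), Function.Injective f →
      (key f = σ ↔ ∀ r, f r ∈ Sset σ) := by
    intro f hinj
    constructor
    · intro hkf r
      have : f r ∈ Finset.image f Finset.univ := Finset.mem_image_of_mem f (Finset.mem_univ r)
      rw [← hkey f, hkf] at this
      exact this
    · intro hall
      have hsub : Finset.image f Finset.univ ⊆ Sset σ := by
        intro p hp
        obtain ⟨r, _, rfl⟩ := Finset.mem_image.mp hp
        exact hall r
      have hcard : (Finset.image f Finset.univ).card = d := by
        rw [Finset.card_image_of_injective _ hinj, Finset.card_univ, Fintype.card_fin]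
      have himg : Finset.image f Finset.univ = Sset σ :=
        Finset.eq_of_subset_of_card_le hsub (by rw [hcard, hScard])
      funext i
      ext k
      rw [hkeydef]
      simp only [Finset.mem_filter, Finset.mem_univ, true_and]
      rw [himg]
      exact mem_Sset
  have hweight : ∀ f : Fin d → (i : Fin n) × Fin (m i), Function.Injective f → key f = σ →
      (∏ r, ξ (f r).1) = ∏ l, ξ l ^ (σ l).card := by
    intro f hinj hkf
    have himg : Finset.image f Finset.univ = Sset σ := by
      rw [← hkey f, hkf]; rfl
    calc (∏ r, ξ (f r).1)
        = ∏ p ∈ Finset.image f Finset.univ, ξ p.1 :=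
          (Finset.prod_image (f := fun p : (i : Fin n) × Fin (m i) => ξ p.1)
            (fun a _ b _ hab => hinj hab)).symm
      _ = ∏ p ∈ Finset.univ.sigma σ, ξ p.1 := by rw [himg]; rfl
      _ = ∏ l, ∏ k ∈ σ l, ξ l := by rw [Finset.prod_sigma]
      _ = ∏ l, ξ l ^ (σ l).card := by
          exact Finset.prod_congr rfl fun l _ => Finset.prod_const _
  rw [Delta_expand, Finset.mul_sum]
  -- restrict the Delta sum to injective f, and match the index sets
  rw [show Finset.univ.filter
      (fun f : Fin d → (i : Fin n) × Fin (m i) => ∀ r, f r ∈ Sset σ)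
    = (Finset.univ.filter
        (fun f : Fin d → (i : Fin n) × Fin (m i) => ∀ r, f r ∈ Sset σ)).filter
        (fun f => Function.Injective f) ∪
      (Finset.univ.filter
        (fun f : Fin d → (i : Fin n) × Fin (m i) => ∀ r, f r ∈ Sset σ)).filter
        (fun f => ¬ Function.Injective f) from
    (Finset.filter_union_filter_not_eq _ _).symm]
  rw [Finset.sum_union (Finset.disjoint_filter_filter_not _ _ _)]
  have hz2 : ∑ f ∈ (Finset.univ.filter
      (fun f : Fin d → (i : Fin n) × Fin (m i) => ∀ r, f r ∈ Sset σ)).filter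
      (fun f => ¬ Function.Injective f), (∏ l, ξ l ^ (σ l).card) * termF F f = 0 := by
    refine Finset.sum_eq_zero fun f hf => ?_
    rw [termF_zero F (Finset.mem_filter.mp hf).2, mul_zero]
  rw [hz2, add_zero]
  refine Finset.sum_congr ?_ fun f hf => ?_
  · ext f
    simp only [Finset.mem_filter, Finset.mem_univ, true_and]
    constructor
    · rintro ⟨hinj, hkf⟩
      exact ⟨(hchar f hinj).mp hkf, hinj⟩
    · rintro ⟨hall, hinj⟩
      exact ⟨hinj, (hchar f hinj).mpr hall⟩
  · simp only [Finset.mem_filter, Finset.mem_univ, true_and] at hf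
    obtain ⟨hall, hinj⟩ := hf
    rw [hweight f hinj ((hchar f hinj).mpr hall)]

lemma Delta_nonneg (F : ∀ i : Fin n, Matrix (Fin d) (Fin (m i)) ℝ)
    {σ : ∀ i : Fin n, Finset (Fin (m i))} (hσ : σ ∈ indexA d m) : 0 ≤ Delta F σ := by
  classical
  have hσd : ∑ i, (σ i).card = d := by simpa [indexA] using hσ
  have hcard : Fintype.card {p : (i : Fin n) × Fin (m i) // p ∈ Sset σ} = d := by
    rw [Fintype.card_coe, Sset, Finset.card_sigma]
    simpa using hσd
  obtain ⟨e⟩ : Nonempty ({p : (i : Fin n) × Fin (m i) // p ∈ Sset σ} ≃ Fin d) :=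
    ⟨Fintype.equivFinOfCardEq hcard⟩
  set Y : Matrix (Fin d) (Fin d) ℝ :=
    Matrix.of fun r j => col F ((e.symm j : {p // p ∈ Sset σ}) : (i : Fin n) × Fin (m i)) r
    with hYdef
  have hY : Delta F σ = (Y * Yᵀ).det := by
    unfold Delta
    congr 1
    ext r s
    calc (∑ i, ∑ k ∈ σ i, Matrix.of (fun r s : Fin d => F i r k * F i s k)) r s
        = ∑ p ∈ Sset σ, col F p r * col F p s := by
          rw [show (Sset σ : Finset ((i : Fin n) × Fin (m i))) = Finset.univ.sigma σ from rfl,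
            Finset.sum_sigma]
          simp [Matrix.sum_apply, col]
      _ = ∑ x : {p // p ∈ Sset σ},
            col F (x : (i : Fin n) × Fin (m i)) r * col F (x : (i : Fin n) × Fin (m i)) s :=
          (Finset.sum_coe_sort _ _).symm
      _ = ∑ j : Fin d, col F ((e.symm j : {p // p ∈ Sset σ}) : (i : Fin n) × Fin (m i)) r *
            col F ((e.symm j : {p // p ∈ Sset σ}) : (i : Fin n) × Fin (m i)) s :=
          (Equiv.sum_comp e.symm _).symm
      _ = (Y * Yᵀ) r s := by simp [hYdef, Matrix.mul_apply]
  rw [hY, Matrix.det_mul, Matrix.det_transpose]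
  exact mul_self_nonneg _


end Aux

end MFrames

namespace MFrames

/-- **Theorem (Constructive aspects of RIFs), equivalence (1) ⟺ (2).**  For a matrix frame
`F`, positive rational weights `c` with `∑ cᵢ = d` and `t* ∈ ℝⁿ`: the infimum defining
`f_F(c)` is finite and attained at `t*` if and only if `(e^{t*₁}, …, e^{t*ₙ}) ∈ 𝕍(F, c)`. -/
theorem f_attained_iff_variety {d n : ℕ} {m : Fin n → ℕ}
    (F : ∀ i : Fin n, Matrix (Fin d) (Fin (m i)) ℝ) (hF : IsMatrixFrame F)
    (c : Fin n → ℚ) (hc : ∀ i, 0 < c i) (hsum : ∑ i, (c i : ℝ) = d)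
    (tstar : Fin n → ℝ) :
    (∀ s : Fin n → ℝ, obj F (fun i => (c i : ℝ)) tstar ≤ obj F (fun i => (c i : ℝ)) s) ↔
      inVariety F (fun i => (c i : ℝ)) (fun i => Real.exp (tstar i)) := by
  classical
  set c' : Fin n → ℝ := fun i => (c i : ℝ) with hc'
  set A : Finset (∀ i : Fin n, Finset (Fin (m i))) := indexA d m with hA
  set a : (∀ i : Fin n, Finset (Fin (m i))) → ℝ := fun σ => Delta F σ with ha
  set L : (∀ i : Fin n, Finset (Fin (m i))) → (Fin n → ℝ) → ℝ :=
    fun σ t => ∑ l, t l * (((σ l).card : ℝ) - c' l) with hL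
  set g : (Fin n → ℝ) → ℝ := fun t => ∑ σ ∈ A, a σ * Real.exp (L σ t) with hg
  have ha_nonneg : ∀ σ ∈ A, 0 ≤ a σ := fun σ hσ => Delta_nonneg F hσ
  -- product-exponential identity
  have hPL : ∀ (σ : ∀ i : Fin n, Finset (Fin (m i))) (t : Fin n → ℝ),
      Real.exp (L σ t) * Real.exp (∑ l, t l * c' l)
        = ∏ l, Real.exp (t l) ^ (σ l).card := by
    intro σ t
    rw [← Real.exp_add]
    have h1 : L σ t + ∑ l, t l * c' l = ∑ l, ((σ l).card : ℝ) * t l := by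
      simp only [hL]
      rw [← Finset.sum_add_distrib]
      exact Finset.sum_congr rfl fun l _ => by ring
    rw [h1, Real.exp_sum]
    exact Finset.prod_congr rfl fun l _ => Real.exp_nat_mul _ _
  have hPe : ∀ (σ : ∀ i : Fin n, Finset (Fin (m i))) (t : Fin n → ℝ),
      (∏ l, Real.exp (t l) ^ (σ l).card) * Real.exp (-(∑ l, t l * c' l))
        = Real.exp (L σ t) := by
    intro σ t
    rw [← hPL σ t, mul_assoc, ← Real.exp_add, add_neg_cancel, Real.exp_zero, mul_one]
  -- g in terms of the determinant
  have hgdet : ∀ t : Fin n → ℝ,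
      g t = (∑ i, Real.exp (t i) • (F i * (F i)ᵀ)).det * Real.exp (-(∑ l, t l * c' l)) := by
    intro t
    rw [det_sum_smul_eq, ← hA, Finset.sum_mul]
    simp only [hg]
    refine Finset.sum_congr rfl fun σ _ => ?_
    show Delta F σ * Real.exp (L σ t) = _
    rw [← hPe σ t]
    ring
  -- determinant positivity
  have hdetpos : ∀ t : Fin n → ℝ, 0 < (∑ i, Real.exp (t i) • (F i * (F i)ᵀ)).det := by
    intro t
    have hfr : frameOp F = ∑ i, (1 : ℝ) • (F i * (F i)ᵀ) := by simp [frameOp]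
    have h1 : (0 : ℝ) < ∑ σ ∈ A, a σ := by
      have := hF.det_pos
      rw [hfr, det_sum_smul_eq, ← hA] at this
      simpa [ha] using this
    have hex : ∃ σ ∈ A, 0 < a σ := by
      by_contra hno
      push_neg at hno
      exact absurd h1 (not_lt.mpr (Finset.sum_nonpos fun σ hσ => hno σ hσ))
    obtain ⟨σ0, hσ0, hσ0pos⟩ := hex
    rw [det_sum_smul_eq, ← hA]
    refine Finset.sum_pos' (fun σ hσ => ?_) ⟨σ0, hσ0, ?_⟩
    · exact mul_nonneg (Finset.prod_nonneg fun l _ => pow_nonneg (Real.exp_pos _).le _)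
        (ha_nonneg σ hσ)
    · exact mul_pos (Finset.prod_pos fun l _ => pow_pos (Real.exp_pos _) _) hσ0pos
  have hgpos : ∀ t : Fin n → ℝ, 0 < g t := by
    intro t
    rw [hgdet t]
    exact mul_pos (hdetpos t) (Real.exp_pos _)
  -- obj = log ∘ g
  have hobj : ∀ t : Fin n → ℝ, obj F c' t = Real.log (g t) := by
    intro t
    rw [hgdet t, Real.log_mul (ne_of_gt (hdetpos t)) (Real.exp_ne_zero _), Real.log_exp]
    unfold obj Phi
    ring
  have hmin_iff : (∀ s : Fin n → ℝ, obj F c' tstar ≤ obj F c' s)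
      ↔ (∀ s : Fin n → ℝ, g tstar ≤ g s) := by
    refine forall_congr' fun s => ?_
    rw [hobj, hobj, Real.log_le_log_iff (hgpos _) (hgpos _)]
  -- the gradient
  set Grad : Fin n → ℝ := fun i =>
    ∑ σ ∈ A, a σ * (((((σ i).card : ℝ)) - c' i) * Real.exp (L σ tstar)) with hGrad
  -- gradient vs variety equations
  have hGid : ∀ i, Grad i * Real.exp (∑ l, tstar l * c' l)
      = (∑ σ ∈ A, ((σ i).card : ℝ) * (∏ l, Real.exp (tstar l) ^ (σ l).card) * a σ)
        - c' i * ∑ σ ∈ A, (∏ l, Real.exp (tstar l) ^ (σ l).card) * a σ := by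
    intro i
    simp only [hGrad]
    rw [Finset.sum_mul, Finset.mul_sum, ← Finset.sum_sub_distrib]
    refine Finset.sum_congr rfl fun σ _ => ?_
    rw [← hPL σ tstar]
    ring
  have hvar_iff : inVariety F c' (fun i => Real.exp (tstar i)) ↔ ∀ i, Grad i = 0 := by
    rw [inVariety]
    constructor
    · rintro ⟨-, heq⟩ i
      have h1 := heq i
      have h2 : Grad i * Real.exp (∑ l, tstar l * c' l) = 0 := by
        rw [hGid i]
        rw [sub_eq_zero]
        simpa [ha, hA] using h1
      exact (mul_eq_zero.mp h2).resolve_right (Real.exp_ne_zero _)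
    · intro hzero
      refine ⟨fun i => Real.exp_pos _, fun i => ?_⟩
      have h2 : Grad i * Real.exp (∑ l, tstar l * c' l) = 0 := by rw [hzero i, zero_mul]
      rw [hGid i, sub_eq_zero] at h2
      simpa [ha, hA] using h2
  -- gradient zero implies global minimum
  have hmin_of_grad : (∀ i, Grad i = 0) → ∀ s : Fin n → ℝ, g tstar ≤ g s := by
    intro hzero s
    have hLdiff : ∀ σ : ∀ i : Fin n, Finset (Fin (m i)),
        L σ s - L σ tstar = ∑ l, (s l - tstar l) * (((σ l).card : ℝ) - c' l) := by
      intro σ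
      rw [hL, ← Finset.sum_sub_distrib]
      exact Finset.sum_congr rfl fun l _ => by ring
    have hcorr : ∑ σ ∈ A, a σ * Real.exp (L σ tstar) * (L σ s - L σ tstar) = 0 := by
      calc ∑ σ ∈ A, a σ * Real.exp (L σ tstar) * (L σ s - L σ tstar)
          = ∑ σ ∈ A, ∑ l, (s l - tstar l)
              * (a σ * ((((σ l).card : ℝ) - c' l) * Real.exp (L σ tstar))) := by
            refine Finset.sum_congr rfl fun σ _ => ?_
            rw [hLdiff σ, Finset.mul_sum]
            exact Finset.sum_congr rfl fun l _ => by ring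
        _ = ∑ l, (s l - tstar l) * Grad l := by
            rw [Finset.sum_comm]
            refine Finset.sum_congr rfl fun l _ => ?_
            simp only [hGrad]
            rw [Finset.mul_sum]
        _ = 0 := by
            refine Finset.sum_eq_zero fun l _ => ?_
            rw [hzero l, mul_zero]
    have hterm : ∀ σ ∈ A,
        a σ * Real.exp (L σ tstar) * (L σ s - L σ tstar + 1) ≤ a σ * Real.exp (L σ s) := by
      intro σ hσ
      have h1 : L σ s - L σ tstar + 1 ≤ Real.exp (L σ s - L σ tstar) :=
        Real.add_one_le_exp _
      have h2 : Real.exp (L σ tstar) * (L σ s - L σ tstar + 1) ≤ Real.exp (L σ s) := by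
        calc Real.exp (L σ tstar) * (L σ s - L σ tstar + 1)
            ≤ Real.exp (L σ tstar) * Real.exp (L σ s - L σ tstar) :=
              mul_le_mul_of_nonneg_left h1 (Real.exp_pos _).le
          _ = Real.exp (L σ s) := by rw [← Real.exp_add]; ring_nf
      calc a σ * Real.exp (L σ tstar) * (L σ s - L σ tstar + 1)
          = a σ * (Real.exp (L σ tstar) * (L σ s - L σ tstar + 1)) := by ring
        _ ≤ a σ * Real.exp (L σ s) := mul_le_mul_of_nonneg_left h2 (ha_nonneg σ hσ)
    have hsum := Finset.sum_le_sum hterm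
    have hexpand : ∑ σ ∈ A, a σ * Real.exp (L σ tstar) * (L σ s - L σ tstar + 1)
        = (∑ σ ∈ A, a σ * Real.exp (L σ tstar) * (L σ s - L σ tstar)) + g tstar := by
      simp only [hg]
      rw [← Finset.sum_add_distrib]
      exact Finset.sum_congr rfl fun σ _ => by ring
    rw [hexpand, hcorr, zero_add] at hsum
    exact hsum
  -- global minimum implies gradient zero
  have hgrad_of_min : (∀ s : Fin n → ℝ, g tstar ≤ g s) → ∀ i, Grad i = 0 := by
    intro hmin i
    set b : (∀ i : Fin n, Finset (Fin (m i))) → ℝ := fun σ => ((σ i).card : ℝ) - c' i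
      with hb
    set e1 : Fin n → ℝ := Pi.single i 1 with he1
    set h : ℝ → ℝ := fun u => ∑ σ ∈ A, a σ * Real.exp (L σ tstar + u * b σ) with hh
    have hLshift : ∀ (σ : ∀ i : Fin n, Finset (Fin (m i))) (u : ℝ),
        L σ (tstar + u • e1) = L σ tstar + u * b σ := by
      intro σ u
      simp only [hL, hb]
      have hsplit : (∑ l, (tstar + u • e1) l * (((σ l).card : ℝ) - c' l))
          = (∑ l, tstar l * (((σ l).card : ℝ) - c' l))
            + ∑ l, u * e1 l * (((σ l).card : ℝ) - c' l) := by
        rw [← Finset.sum_add_distrib]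
        refine Finset.sum_congr rfl fun l _ => ?_
        simp only [Pi.add_apply, Pi.smul_apply, smul_eq_mul]
        ring
      rw [hsplit]
      congr 1
      have hterm : ∀ l, u * e1 l * (((σ l).card : ℝ) - c' l)
          = if l = i then u * (((σ l).card : ℝ) - c' l) else 0 := by
        intro l
        rw [he1, Pi.single_apply]
        split <;> simp
      rw [Finset.sum_congr rfl fun l _ => hterm l,
        Finset.sum_ite_eq' Finset.univ i (fun l => u * (((σ l).card : ℝ) - c' l))]
      simp
    have hval : ∀ u : ℝ, h u = g (tstar + u • e1) := by
      intro u
      simp only [hh, hg]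
      exact Finset.sum_congr rfl fun σ _ => by rw [hLshift σ u]
    have hmin0 : ∀ u : ℝ, h 0 ≤ h u := by
      intro u
      rw [hval 0, hval u]
      have h0 : tstar + (0 : ℝ) • e1 = tstar := by simp
      rw [h0]
      exact hmin _
    have hderiv : HasDerivAt h
        (∑ σ ∈ A, a σ * (Real.exp (L σ tstar + 0 * b σ) * b σ)) 0 := by
      simp only [hh]
      refine HasDerivAt.fun_sum fun σ _ => ?_
      exact (((hasDerivAt_mul_const (b σ)).const_add (L σ tstar)).exp).const_mul (a σ)
    have hlocal : IsLocalMin h 0 := Filter.Eventually.of_forall hmin0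
    have hzero := hlocal.hasDerivAt_eq_zero hderiv
    have hGi : Grad i = ∑ σ ∈ A, a σ * (Real.exp (L σ tstar + 0 * b σ) * b σ) := by
      simp only [hGrad, hb]
      refine Finset.sum_congr rfl fun σ _ => ?_
      rw [zero_mul, add_zero]
      ring
    rw [hGi, hzero]
  rw [hmin_iff, hvar_iff]
  exact ⟨hgrad_of_min, hmin_of_grad⟩

end MFrames
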